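/- Let n ≥ 2, let 𝒞 ⊂ ℝⁿ be a cone of positive Lebesgue measure, and let α ∈ [(n/(n+1))ⁿ, 1 − (n/(n+1))ⁿ]. Then there exist an affine hyperplane Π passing through the centroid of 𝒞 and a closed half-space Π⁺ with boundary Π such that |𝒞 ∩ Π⁺|/|𝒞| = α. -/

import Mathlib

open MeasureTheory Set

/-- A cone in ℝⁿ: the convex hull of a point (its vertex) and a compact convex
set contained in some affine hyperplane (its base). -/
def IsCone {n : ℕ} (C : Set (EuclideanSpace ℝ (Fin n))) : Prop :=
  ∃ (v : EuclideanSpace ℝ (Fin n)) (B : Set (EuclideanSpace ℝ (Fin n))),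
    IsCompact B ∧ Convex ℝ B ∧
    (∃ (w : EuclideanSpace ℝ (Fin n)) (t : ℝ), w ≠ 0 ∧ ∀ y ∈ B, (inner ℝ w y : ℝ) = t) ∧
    C = convexHull ℝ (insert v B)

section ConeAux

open Bornology RealInnerProductSpace

variable {n : ℕ}

lemma aux_hyperplane_null (u : EuclideanSpace ℝ (Fin n)) (hu : u ≠ 0) (c : ℝ) :
    volume {x : EuclideanSpace ℝ (Fin n) | ⟪u, x⟫ = c} = 0 := by
  have hker : LinearMap.ker (innerSL ℝ u : EuclideanSpace ℝ (Fin n) →ₗ[ℝ] ℝ) ≠ ⊤ := by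
    intro h
    apply hu
    have h2 : u ∈ LinearMap.ker (innerSL ℝ u : EuclideanSpace ℝ (Fin n) →ₗ[ℝ] ℝ) := h ▸ Submodule.mem_top
    have : ⟪u, u⟫ = 0 := h2
    rwa [inner_self_eq_zero] at this
  have hx₀ : ⟪u, ((c / ‖u‖^2) • u : EuclideanSpace ℝ (Fin n))⟫ = c := by
    rw [real_inner_smul_right, real_inner_self_eq_norm_sq]
    have : ‖u‖ ≠ 0 := norm_ne_zero_iff.2 hu
    field_simp
  set x₀ : EuclideanSpace ℝ (Fin n) := (c / ‖u‖^2) • u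
  have hset : {x : EuclideanSpace ℝ (Fin n) | ⟪u, x⟫ = c} =
      (fun y => y + x₀) '' ((LinearMap.ker (innerSL ℝ u : EuclideanSpace ℝ (Fin n) →ₗ[ℝ] ℝ) : Submodule ℝ (EuclideanSpace ℝ (Fin n))) : Set (EuclideanSpace ℝ (Fin n))) := by
    ext x
    simp only [mem_setOf_eq, mem_image, SetLike.mem_coe, LinearMap.mem_ker]
    constructor
    · intro hx
      refine ⟨x - x₀, ?_, by abel⟩
      simp [inner_sub_right, hx, hx₀]
    · rintro ⟨y, hy, rfl⟩
      simp only [ContinuousLinearMap.coe_coe, innerSL_apply_apply] at hy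
      rw [inner_add_right, hy, hx₀, zero_add]
  rw [hset, image_add_right, measure_preimage_add_right]
  exact MeasureTheory.Measure.addHaar_submodule volume _ hker

lemma mem_cone_iff {v : EuclideanSpace ℝ (Fin n)} {B : Set (EuclideanSpace ℝ (Fin n))}
    (hBconv : Convex ℝ B) (hBne : B.Nonempty) (x : EuclideanSpace ℝ (Fin n)) :
    x ∈ convexHull ℝ (insert v B) ↔
      ∃ r b, r ∈ Icc (0:ℝ) 1 ∧ b ∈ B ∧ x = (1 - r) • v + r • b := by
  rw [convexHull_insert hBne, hBconv.convexHull_eq, mem_convexJoin]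
  constructor
  · rintro ⟨a, ha, b, hb, hseg⟩
    rw [mem_singleton_iff] at ha; subst ha
    rw [segment_eq_image] at hseg
    obtain ⟨r, hr, hx⟩ := hseg
    exact ⟨r, b, hr, hb, hx.symm⟩
  · rintro ⟨r, b, hr, hb, rfl⟩
    exact ⟨v, rfl, b, hb, by rw [segment_eq_image]; exact ⟨r, hr, rfl⟩⟩

lemma inner_combo {v b w : EuclideanSpace ℝ (Fin n)} (r : ℝ) :
    ⟪w, (1 - r) • v + r • b⟫ = ⟪w, v⟫ + r * (⟪w, b⟫ - ⟪w, v⟫) := by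
  rw [inner_add_right, real_inner_smul_right, real_inner_smul_right]; ring

lemma slice_eq {v : EuclideanSpace ℝ (Fin n)} {B : Set (EuclideanSpace ℝ (Fin n))}
    (hBconv : Convex ℝ B) (hBne : B.Nonempty)
    {w : EuclideanSpace ℝ (Fin n)} {t : ℝ} (hwB : ∀ y ∈ B, ⟪w, y⟫ = t) (hvt : ⟪w, v⟫ < t)
    {s : ℝ} (hs0 : 0 < s) (hs1 : s ≤ 1) :
    convexHull ℝ (insert v B) ∩ {x | ⟪w, x⟫ ≤ ⟪w, v⟫ + s * (t - ⟪w, v⟫)} =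
      (fun x => v + s • (x - v)) '' convexHull ℝ (insert v B) := by
  have hT : 0 < t - ⟪w, v⟫ := sub_pos.2 hvt
  ext x
  constructor
  · rintro ⟨hxC, hxle⟩
    obtain ⟨r, b, ⟨hr0, hr1⟩, hb, rfl⟩ := (mem_cone_iff hBconv hBne _).1 hxC
    rw [mem_setOf_eq, inner_combo, hwB b hb] at hxle
    have hrs : r ≤ s := le_of_mul_le_mul_right (by linarith) hT
    refine ⟨(1 - r/s) • v + (r/s) • b,
      (mem_cone_iff hBconv hBne _).2 ⟨r/s, b,
        ⟨div_nonneg hr0 hs0.le, (div_le_one hs0).2 hrs⟩, hb, rfl⟩, ?_⟩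
    have hsr : s * (r / s) = r := by field_simp
    calc v + s • (((1 - r/s) • v + (r/s) • b) - v) = v + (s * (r/s)) • (b - v) := by module
    _ = (1 - r) • v + r • b := by rw [hsr]; module
  · rintro ⟨y, hyC, rfl⟩
    obtain ⟨ρ, b, ⟨hρ0, hρ1⟩, hb, rfl⟩ := (mem_cone_iff hBconv hBne _).1 hyC
    have hx : v + s • (((1 - ρ) • v + ρ • b) - v) = (1 - s * ρ) • v + (s * ρ) • b := by module
    beta_reduce
    rw [hx]
    refine ⟨(mem_cone_iff hBconv hBne _).2 ⟨s * ρ, b,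
      ⟨mul_nonneg hs0.le hρ0, le_trans (by nlinarith) hs1⟩, hb, rfl⟩, ?_⟩
    rw [mem_setOf_eq, inner_combo, hwB b hb]
    have h1 : s * ρ ≤ s := by nlinarith
    nlinarith [mul_le_mul_of_nonneg_right h1 hT.le]

lemma volume_slice {v : EuclideanSpace ℝ (Fin n)} {B : Set (EuclideanSpace ℝ (Fin n))}
    (hBconv : Convex ℝ B) (hBne : B.Nonempty)
    {w : EuclideanSpace ℝ (Fin n)} {t : ℝ} (hwB : ∀ y ∈ B, ⟪w, y⟫ = t) (hvt : ⟪w, v⟫ < t)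
    {s : ℝ} (hs0 : 0 < s) (hs1 : s ≤ 1) :
    volume (convexHull ℝ (insert v B) ∩ {x | ⟪w, x⟫ ≤ ⟪w, v⟫ + s * (t - ⟪w, v⟫)}) =
      ENNReal.ofReal (s ^ n) * volume (convexHull ℝ (insert v B)) := by
  rw [slice_eq hBconv hBne hwB hvt hs0 hs1]
  have : ((fun x => v + s • (x - v)) '' convexHull ℝ (insert v B)) =
      (AffineMap.homothety v s) '' convexHull ℝ (insert v B) := by
    apply image_congr
    intro x _
    simp only [AffineMap.homothety_apply, vsub_eq_sub, vadd_eq_add]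
    module
  rw [this, MeasureTheory.Measure.addHaar_image_homothety,
    finrank_euclideanSpace_fin, abs_of_nonneg (pow_nonneg hs0.le n)]

lemma cone_inner_bounds {v : EuclideanSpace ℝ (Fin n)} {B : Set (EuclideanSpace ℝ (Fin n))}
    (hBconv : Convex ℝ B) (hBne : B.Nonempty)
    {w : EuclideanSpace ℝ (Fin n)} {t : ℝ} (hwB : ∀ y ∈ B, ⟪w, y⟫ = t) (hvt : ⟪w, v⟫ < t)
    {x : EuclideanSpace ℝ (Fin n)} (hx : x ∈ convexHull ℝ (insert v B)) :
    ⟪w, v⟫ ≤ ⟪w, x⟫ ∧ ⟪w, x⟫ ≤ t := by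
  obtain ⟨r, b, ⟨hr0, hr1⟩, hb, rfl⟩ := (mem_cone_iff hBconv hBne _).1 hx
  rw [inner_combo, hwB b hb]
  constructor
  · nlinarith
  · nlinarith

lemma integral_inner_cone {v : EuclideanSpace ℝ (Fin n)} {B : Set (EuclideanSpace ℝ (Fin n))}
    (hBcpt : IsCompact B) (hBconv : Convex ℝ B) (hBne : B.Nonempty)
    {w : EuclideanSpace ℝ (Fin n)} {t : ℝ} (hwB : ∀ y ∈ B, ⟪w, y⟫ = t) (hvt : ⟪w, v⟫ < t)
    (hfin : volume (convexHull ℝ (insert v B)) ≠ ⊤) :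
    ∫ x in convexHull ℝ (insert v B), ⟪w, x⟫ =
      (volume (convexHull ℝ (insert v B))).toReal *
        (⟪w, v⟫ + ((n : ℝ) / (n + 1)) * (t - ⟪w, v⟫)) := by
  set C := convexHull ℝ (insert v B) with hCdef
  set a : ℝ := ⟪w, v⟫ with ha
  set T : ℝ := t - a with hTdef
  have hT : 0 < T := sub_pos.2 hvt
  set V : ℝ := (volume C).toReal with hV
  have hCconv : Convex ℝ C := convex_convexHull ℝ _
  have hCnm : NullMeasurableSet C volume :=
    Convex.nullMeasurableSet (μ := (volume : Measure (EuclideanSpace ℝ (Fin n)))) hCconv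
  have hCbd : IsBounded C := isBounded_convexHull.mpr ((hBcpt.isBounded).insert v)
  obtain ⟨R, hR⟩ := isBounded_iff_forall_norm_le.mp hCbd
  have hid : IntegrableOn id C volume := by
    apply Measure.integrableOn_of_bounded hfin aestronglyMeasurable_id
    exact (ae_restrict_mem₀ hCnm).mono fun x hx => hR x hx
  have hinner : Integrable (fun x => ⟪w, x⟫) (volume.restrict C) := by
    have := (innerSL ℝ w).integrable_comp hid
    simpa using this
  -- layer cake
  have hnn : 0 ≤ᵐ[volume.restrict C] fun x => ⟪w, x⟫ - a :=
    (ae_restrict_mem₀ hCnm).mono fun x hx =>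
      sub_nonneg.2 (cone_inner_bounds hBconv hBne hwB hvt hx).1
  haveI : IsFiniteMeasure (volume.restrict C) :=
    ⟨by rwa [Measure.restrict_apply_univ, lt_top_iff_ne_top]⟩
  have key := Integrable.integral_eq_integral_meas_lt (hinner.sub (integrable_const a)) hnn
  simp only [Pi.sub_apply] at key
  -- identify the measure function
  have hmeas : ∀ s ∈ Ioi (0:ℝ), ((volume.restrict C) {x | s < ⟪w, x⟫ - a}).toReal =
      (if s < T then V - (s / T) ^ n * V else 0) := by
    intro s hs
    rw [mem_Ioi] at hs
    have hSm : MeasurableSet {x : EuclideanSpace ℝ (Fin n) | s < ⟪w, x⟫ - a} := by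
      have : Continuous fun x : EuclideanSpace ℝ (Fin n) => ⟪w, x⟫ - a :=
        (continuous_const.inner continuous_id).sub continuous_const
      exact measurableSet_lt measurable_const this.measurable
    rw [Measure.restrict_apply hSm]
    by_cases hsT : s < T
    · rw [if_pos hsT]
      have hsub : {x : EuclideanSpace ℝ (Fin n) | s < ⟪w, x⟫ - a} ∩ C =
          C \ (C ∩ {x | ⟪w, x⟫ ≤ a + (s / T) * (t - a)}) := by
        have hst : s / T * (t - a) = s := by rw [← hTdef]; field_simp
        ext x
        simp only [mem_inter_iff, mem_setOf_eq, mem_diff, hst]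
        constructor
        · rintro ⟨h1, h2⟩; exact ⟨h2, fun h => by linarith [h.2]⟩
        · rintro ⟨h1, h2⟩
          refine ⟨by by_contra h; exact h2 ⟨h1, by linarith⟩, h1⟩
      have hDvol : volume (C ∩ {x | ⟪w, x⟫ ≤ a + (s / T) * (t - a)}) =
          ENNReal.ofReal ((s / T) ^ n) * volume C :=
        volume_slice hBconv hBne hwB hvt (div_pos hs hT) (by rw [div_le_one hT]; linarith)
      have hDle : ENNReal.ofReal ((s / T) ^ n) * volume C ≤ volume C := by
        rw [← hDvol]
        exact measure_mono inter_subset_left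
      have hlin : IsLinearMap ℝ (fun x : EuclideanSpace ℝ (Fin n) => ⟪w, x⟫) :=
        ⟨fun a b => inner_add_right _ _ _, fun c x => real_inner_smul_right _ _ _⟩
      have hDnm : NullMeasurableSet (C ∩ {x | ⟪w, x⟫ ≤ a + (s / T) * (t - a)}) volume :=
        Convex.nullMeasurableSet (μ := (volume : Measure (EuclideanSpace ℝ (Fin n))))
          (hCconv.inter (convex_halfSpace_le hlin _))
      rw [hsub, measure_diff inter_subset_left hDnm
          (ne_top_of_le_ne_top hfin (measure_mono inter_subset_left)), hDvol,
        ENNReal.toReal_sub_of_le hDle hfin, ENNReal.toReal_mul,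
        ENNReal.toReal_ofReal (pow_nonneg (div_nonneg hs.le hT.le) n)]
    · rw [if_neg hsT]
      have : {x : EuclideanSpace ℝ (Fin n) | s < ⟪w, x⟫ - a} ∩ C = ∅ := by
        ext x
        simp only [mem_inter_iff, mem_setOf_eq, mem_empty_iff_false, iff_false, not_and]
        intro hlt hxC
        have := (cone_inner_bounds hBconv hBne hwB hvt hxC).2
        push_neg at hsT
        linarith
      rw [this, measure_empty, ENNReal.toReal_zero]
  -- evaluate the layer cake integral
  have hIoc : ∫ s in Ioi (0:ℝ), ((volume.restrict C) {x | s < ⟪w, x⟫ - a}).toReal =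
      ∫ s in Ioc (0:ℝ) T, (V - (s / T) ^ n * V) := by
    rw [setIntegral_congr_fun measurableSet_Ioi hmeas]
    rw [setIntegral_eq_of_subset_of_ae_diff_eq_zero measurableSet_Ioi.nullMeasurableSet
      Ioc_subset_Ioi_self (Filter.Eventually.of_forall ?_)]
    · apply setIntegral_congr_fun measurableSet_Ioc
      intro s hs
      beta_reduce
      by_cases hsT : s < T
      · rw [if_pos hsT]
      · have hsT' : s = T := le_antisymm hs.2 (not_lt.1 hsT)
        rw [if_neg hsT, hsT', div_self hT.ne', one_pow, one_mul, sub_self]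
    · intro x hx
      beta_reduce
      have hxT : T < x := by
        rcases hx with ⟨hx1, hx2⟩
        rw [mem_Ioi] at hx1
        by_contra h
        exact hx2 ⟨hx1, not_lt.1 h⟩
      rw [if_neg (not_lt.2 hxT.le)]
  have hval : ∫ s in Ioc (0:ℝ) T, (V - (s / T) ^ n * V) = V * T * n / (n + 1) := by
    rw [← intervalIntegral.integral_of_le hT.le]
    have heq : ∀ s : ℝ, V - (s / T) ^ n * V = V - (V / T ^ n) * s ^ n := by
      intro s; rw [div_pow]; field_simp
    simp only [heq]
    rw [intervalIntegral.integral_sub (f := fun _ => V) (g := fun x : ℝ => V / T ^ n * x ^ n)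
      intervalIntegrable_const
      ((continuous_const.mul (continuous_pow n)).intervalIntegrable _ _),
      intervalIntegral.integral_const, intervalIntegral.integral_const_mul, integral_pow]
    have hn1 : (n : ℝ) + 1 ≠ 0 := by positivity
    field_simp
    ring
  have hconst : ∫ _x in C, a ∂volume = V * a := by
    rw [setIntegral_const, smul_eq_mul, measureReal_def, ← hV, mul_comm]
  have hsub2 : ∫ x in C, (⟪w, x⟫ - a) ∂volume = (∫ x in C, ⟪w, x⟫ ∂volume) - V * a := by
    rw [integral_sub hinner (integrable_const a), hconst]
  have : (∫ x in C, ⟪w, x⟫ ∂volume) - V * a = V * T * n / (n + 1) := by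
    rw [← hsub2, key]; simp only [measureReal_def]; rw [hIoc, hval]
  have hgoal : (volume C).toReal * (⟪w, v⟫ + (n : ℝ) / (n + 1) * (t - ⟪w, v⟫)) =
      V * a + V * T * n / (n + 1) := by
    rw [← hV, ← ha, ← hTdef]
    field_simp
  rw [hgoal]
  linarith [this]

lemma g_tendsto {C : Set (EuclideanSpace ℝ (Fin n))} (hfin : volume C ≠ ⊤)
    (z : EuclideanSpace ℝ (Fin n)) {u₀ : EuclideanSpace ℝ (Fin n)} (hu₀ : u₀ ≠ 0) :
    Filter.Tendsto (fun u : EuclideanSpace ℝ (Fin n) =>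
        (volume (C ∩ {x | ⟪u, z⟫ ≤ ⟪u, x⟫})).toReal) (nhds u₀)
      (nhds ((volume (C ∩ {x | ⟪u₀, z⟫ ≤ ⟪u₀, x⟫})).toReal)) := by
  haveI : IsFiniteMeasure (volume.restrict C) :=
    ⟨by rwa [Measure.restrict_apply_univ, lt_top_iff_ne_top]⟩
  have hH : ∀ u : EuclideanSpace ℝ (Fin n),
      MeasurableSet {x : EuclideanSpace ℝ (Fin n) | ⟪u, z⟫ ≤ ⟪u, x⟫} := fun u =>
    measurableSet_le measurable_const (continuous_const.inner continuous_id).measurable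
  have hrepr : ∀ u : EuclideanSpace ℝ (Fin n), (volume (C ∩ {x | ⟪u, z⟫ ≤ ⟪u, x⟫})).toReal =
      ∫ x, ({x : EuclideanSpace ℝ (Fin n) | ⟪u, z⟫ ≤ ⟪u, x⟫}).indicator
        (fun _ => (1:ℝ)) x ∂(volume.restrict C) := by
    intro u
    rw [show ({x : EuclideanSpace ℝ (Fin n) | ⟪u, z⟫ ≤ ⟪u, x⟫}).indicator (fun _ => (1:ℝ)) =
      ({x : EuclideanSpace ℝ (Fin n) | ⟪u, z⟫ ≤ ⟪u, x⟫}).indicator 1 from rfl]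
    rw [integral_indicator_one (hH u), measureReal_def, Measure.restrict_apply (hH u), inter_comm]
  simp only [hrepr]
  apply tendsto_integral_filter_of_dominated_convergence (fun _ => (1:ℝ))
  · exact Filter.Eventually.of_forall fun u =>
      (measurable_const.indicator (hH u)).aestronglyMeasurable
  · refine Filter.Eventually.of_forall fun u => Filter.Eventually.of_forall fun x => ?_
    classical
    by_cases h : x ∈ {x : EuclideanSpace ℝ (Fin n) | ⟪u, z⟫ ≤ ⟪u, x⟫}
    · rw [indicator_of_mem h]; norm_num
    · rw [indicator_of_notMem h]; norm_num
  · exact integrable_const 1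
  · have hnull : ∀ᵐ x ∂(volume.restrict C), ⟪u₀, x⟫ ≠ ⟪u₀, z⟫ := by
      have h0 : (volume.restrict C) {x : EuclideanSpace ℝ (Fin n) | ⟪u₀, x⟫ = ⟪u₀, z⟫} = 0 :=
        measure_mono_null (fun x hx => hx)
          (le_antisymm (le_trans (Measure.restrict_le_self _)
            (le_of_eq (aux_hyperplane_null u₀ hu₀ _))) zero_le)
      exact (ae_iff).2 (by simpa using h0)
    filter_upwards [hnull] with x hx
    rcases lt_or_gt_of_ne hx with hlt | hgt
    · have hev : ∀ᶠ u in nhds u₀, ⟪u, x⟫ < ⟪u, z⟫ :=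
        (isOpen_lt (continuous_id.inner continuous_const)
          (continuous_id.inner continuous_const)).mem_nhds hlt
      have hval : ({x' : EuclideanSpace ℝ (Fin n) | ⟪u₀, z⟫ ≤ ⟪u₀, x'⟫}).indicator
          (fun _ => (1:ℝ)) x = 0 := indicator_of_notMem (show x ∉ {x' : EuclideanSpace ℝ (Fin n) | ⟪u₀, z⟫ ≤ ⟪u₀, x'⟫} from not_le.2 hlt) (fun _ => (1:ℝ))
      rw [hval]
      apply Filter.Tendsto.congr' _ tendsto_const_nhds
      filter_upwards [hev] with u hu
      exact (indicator_of_notMem (show x ∉ {x' : EuclideanSpace ℝ (Fin n) | ⟪u, z⟫ ≤ ⟪u, x'⟫} from not_le.2 hu) (fun _ => (1:ℝ))).symm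
    · have hev : ∀ᶠ u in nhds u₀, ⟪u, z⟫ < ⟪u, x⟫ :=
        (isOpen_lt (continuous_id.inner continuous_const)
          (continuous_id.inner continuous_const)).mem_nhds hgt
      have hval : ({x' : EuclideanSpace ℝ (Fin n) | ⟪u₀, z⟫ ≤ ⟪u₀, x'⟫}).indicator
          (fun _ => (1:ℝ)) x = 1 := indicator_of_mem (show x ∈ {x' : EuclideanSpace ℝ (Fin n) | ⟪u₀, z⟫ ≤ ⟪u₀, x'⟫} from hgt.le) (fun _ => (1:ℝ))
      rw [hval]
      apply Filter.Tendsto.congr' _ tendsto_const_nhds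
      filter_upwards [hev] with u hu
      exact (indicator_of_mem (show x ∈ {x' : EuclideanSpace ℝ (Fin n) | ⟪u, z⟫ ≤ ⟪u, x'⟫} from hu.le) (fun _ => (1:ℝ))).symm

lemma flip_volume {C : Set (EuclideanSpace ℝ (Fin n))} (hfin : volume C ≠ ⊤)
    (z : EuclideanSpace ℝ (Fin n)) {u : EuclideanSpace ℝ (Fin n)} (hu : u ≠ 0) :
    (volume (C ∩ {x | ⟪u, z⟫ ≤ ⟪u, x⟫})).toReal =
      (volume C).toReal - (volume (C ∩ {x | ⟪u, x⟫ ≤ ⟪u, z⟫})).toReal := by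
  have hH1 : MeasurableSet {x : EuclideanSpace ℝ (Fin n) | ⟪u, z⟫ ≤ ⟪u, x⟫} :=
    measurableSet_le measurable_const (continuous_const.inner continuous_id).measurable
  have hH2 : MeasurableSet {x : EuclideanSpace ℝ (Fin n) | ⟪u, x⟫ ≤ ⟪u, z⟫} :=
    measurableSet_le (continuous_const.inner continuous_id).measurable measurable_const
  set ν := volume.restrict C with hν
  have key : ν {x | ⟪u, z⟫ ≤ ⟪u, x⟫} + ν {x | ⟪u, x⟫ ≤ ⟪u, z⟫} = volume C := by
    rw [← measure_union_add_inter _ hH2]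
    have h1 : {x : EuclideanSpace ℝ (Fin n) | ⟪u, z⟫ ≤ ⟪u, x⟫} ∪ {x | ⟪u, x⟫ ≤ ⟪u, z⟫} =
        univ := by
      ext x; simp only [mem_union, mem_setOf_eq, mem_univ, iff_true]
      exact (le_total (⟪u, z⟫) (⟪u, x⟫)).imp id id
    have h2 : ν ({x : EuclideanSpace ℝ (Fin n) | ⟪u, z⟫ ≤ ⟪u, x⟫} ∩
        {x | ⟪u, x⟫ ≤ ⟪u, z⟫}) = 0 := by
      apply measure_mono_null (t := {x : EuclideanSpace ℝ (Fin n) | ⟪u, x⟫ = ⟪u, z⟫})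
      · rintro x ⟨hx1, hx2⟩; exact le_antisymm hx2 hx1
      · exact le_antisymm (le_trans (Measure.restrict_le_self _)
          (le_of_eq (aux_hyperplane_null u hu _))) zero_le
    rw [h1, h2, add_zero, Measure.restrict_apply_univ]
  have e1 : ν {x | ⟪u, z⟫ ≤ ⟪u, x⟫} = volume (C ∩ {x | ⟪u, z⟫ ≤ ⟪u, x⟫}) := by
    rw [hν, Measure.restrict_apply hH1, inter_comm]
  have e2 : ν {x | ⟪u, x⟫ ≤ ⟪u, z⟫} = volume (C ∩ {x | ⟪u, x⟫ ≤ ⟪u, z⟫}) := by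
    rw [hν, Measure.restrict_apply hH2, inter_comm]
  have f1 : volume (C ∩ {x | ⟪u, z⟫ ≤ ⟪u, x⟫}) ≠ ⊤ :=
    ne_top_of_le_ne_top hfin (measure_mono inter_subset_left)
  have f2 : volume (C ∩ {x | ⟪u, x⟫ ≤ ⟪u, z⟫}) ≠ ⊤ :=
    ne_top_of_le_ne_top hfin (measure_mono inter_subset_left)
  rw [e1, e2] at key
  have := congrArg ENNReal.toReal key
  rw [ENNReal.toReal_add f1 f2] at this
  linarith

lemma halfspace_neg (z u : EuclideanSpace ℝ (Fin n)) :
    {x : EuclideanSpace ℝ (Fin n) | ⟪-u, z⟫ ≤ ⟪-u, x⟫} = {x | ⟪u, x⟫ ≤ ⟪u, z⟫} := by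
  ext x
  simp only [mem_setOf_eq, inner_neg_left, neg_le_neg_iff]

lemma halfspace_smul₁ (z u : EuclideanSpace ℝ (Fin n)) {r : ℝ} (hr : 0 < r) :
    {x : EuclideanSpace ℝ (Fin n) | ⟪r • u, z⟫ ≤ ⟪r • u, x⟫} = {x | ⟪u, z⟫ ≤ ⟪u, x⟫} := by
  ext x
  simp only [mem_setOf_eq, real_inner_smul_left]
  exact mul_le_mul_iff_of_pos_left hr

lemma halfspace_smul₂ (z u : EuclideanSpace ℝ (Fin n)) {r : ℝ} (hr : 0 < r) :
    {x : EuclideanSpace ℝ (Fin n) | ⟪r • u, x⟫ ≤ ⟪r • u, z⟫} = {x | ⟪u, x⟫ ≤ ⟪u, z⟫} := by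
  ext x
  simp only [mem_setOf_eq, real_inner_smul_left]
  exact mul_le_mul_iff_of_pos_left hr

end ConeAux

section Main
open Bornology RealInnerProductSpace

/-- For any cone and any `α ∈ [(n/(n+1))ⁿ, 1 - (n/(n+1))ⁿ]` there is a closed
half-space, with boundary hyperplane through the centroid of the cone, that cuts
off exactly a fraction `α` of the volume. -/
theorem cone_halfspace_ratio (n : ℕ) (hn : 2 ≤ n)
    (C : Set (EuclideanSpace ℝ (Fin n))) (hC : IsCone C) (hCpos : 0 < volume C)
    (α : ℝ) (hα : α ∈ Icc (((n:ℝ) / (n + 1)) ^ n) (1 - ((n:ℝ) / (n + 1)) ^ n)) :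
    ∃ (u : EuclideanSpace ℝ (Fin n)) (t : ℝ), u ≠ 0 ∧
      (inner ℝ u ((volume C).toReal⁻¹ • (∫ x in C, x)) : ℝ) = t ∧
      (volume (C ∩ {x | t ≤ (inner ℝ u x : ℝ)})).toReal / (volume C).toReal = α := by
  classical
  obtain ⟨v, B, hBcpt, hBconv, ⟨w₀, t₀, hw₀, hwB₀⟩, hCeq⟩ := hC
  subst hCeq
  set C := convexHull ℝ (insert v B) with hC'
  -- B is nonempty
  have hBne : B.Nonempty := by
    by_contra h
    rw [not_nonempty_iff_eq_empty] at h
    rw [hC', h, LawfulSingleton.insert_empty_eq, convexHull_singleton] at hCpos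
    have : volume ({v} : Set (EuclideanSpace ℝ (Fin n))) = 0 :=
      measure_mono_null (by
        rintro x rfl
        exact mem_setOf_eq ▸ rfl)
        (aux_hyperplane_null w₀ hw₀ ⟪w₀, v⟫)
    simp [this] at hCpos
  have hfin : volume C ≠ ⊤ :=
    (IsBounded.measure_lt_top (isBounded_convexHull.mpr ((hBcpt.isBounded).insert v))).ne
  -- orientation
  have hlin : IsLinearMap ℝ (fun x : EuclideanSpace ℝ (Fin n) => ⟪w₀, x⟫) :=
    ⟨fun a b => inner_add_right _ _ _, fun c x => real_inner_smul_right _ _ _⟩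
  have hneq : ⟪w₀, v⟫ ≠ t₀ := by
    intro h
    have hsub : C ⊆ {x : EuclideanSpace ℝ (Fin n) | ⟪w₀, x⟫ = t₀} := by
      apply convexHull_min _ (convex_hyperplane hlin t₀)
      rintro y (rfl | hy)
      · exact h
      · exact hwB₀ y hy
    exact absurd (measure_mono_null hsub (aux_hyperplane_null w₀ hw₀ t₀)) hCpos.ne'
  obtain ⟨w, t, hwB, hvt⟩ : ∃ w t, (∀ y ∈ B, ⟪w, y⟫ = t) ∧ ⟪w, v⟫ < t := by
    rcases lt_or_gt_of_ne hneq with h | h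
    · exact ⟨w₀, t₀, hwB₀, h⟩
    · refine ⟨-w₀, -t₀, fun y hy => ?_, ?_⟩
      · rw [inner_neg_left, hwB₀ y hy]
      · rw [inner_neg_left]; linarith
  have hw : w ≠ 0 := by
    intro h
    obtain ⟨b, hb⟩ := hBne
    have h1 := hwB b hb
    rw [h] at h1 hvt
    rw [inner_zero_left] at h1 hvt
    rw [← h1] at hvt
    exact lt_irrefl _ hvt
  set V : ℝ := (volume C).toReal with hV
  have hVpos : 0 < V := ENNReal.toReal_pos hCpos.ne' hfin
  set z : EuclideanSpace ℝ (Fin n) := V⁻¹ • (∫ x in C, x) with hz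
  set a : ℝ := ⟪w, v⟫ with ha
  set T : ℝ := t - a with hT
  have hTpos : 0 < T := sub_pos.2 hvt
  -- integrability of id
  have hCnm : NullMeasurableSet C volume :=
    Convex.nullMeasurableSet (μ := (volume : Measure (EuclideanSpace ℝ (Fin n))))
      (convex_convexHull ℝ _)
  obtain ⟨R, hR⟩ := isBounded_iff_forall_norm_le.mp
    (isBounded_convexHull.mpr ((hBcpt.isBounded).insert v))
  have hid : IntegrableOn id C volume := by
    apply Measure.integrableOn_of_bounded hfin aestronglyMeasurable_id
    exact (ae_restrict_mem₀ hCnm).mono fun x hx => hR x hx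
  -- centroid inner product
  have hcent : ⟪w, z⟫ = a + ((n : ℝ) / (n + 1)) * T := by
    rw [hz, real_inner_smul_right]
    rw [hV]
    have hcomm : ∫ x in C, ⟪w, x⟫ = ⟪w, ∫ x in C, x⟫ := by
      have := (innerSL ℝ w).integral_comp_comm hid
      simpa using this
    rw [← hcomm, integral_inner_cone hBcpt hBconv hBne hwB hvt hfin, ← hV, ← ha, ← hT]
    field_simp
  -- the function g
  set g : EuclideanSpace ℝ (Fin n) → ℝ :=
    fun u => (volume (C ∩ {x | ⟪u, z⟫ ≤ ⟪u, x⟫})).toReal / V with hg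
  set c : ℝ := ((n : ℝ) / (n + 1)) ^ n with hc
  have hc_slice : volume (C ∩ {x | ⟪w, x⟫ ≤ ⟪w, z⟫}) = ENNReal.ofReal c * volume C := by
    have hn0 : (0 : ℝ) < (n : ℝ) / (n + 1) := by positivity
    have hn1 : ((n : ℝ) / (n + 1)) ≤ 1 := by
      rw [div_le_one (by positivity)]; linarith
    have := volume_slice hBconv hBne hwB hvt hn0 hn1
    rw [← ha, ← hT] at this
    rw [hcent, this, hc]
  -- sphere setup
  have hwn : (0:ℝ) < ‖w‖ := norm_pos_iff.2 hw
  have hqmem : ‖w‖⁻¹ • w ∈ Metric.sphere (0 : EuclideanSpace ℝ (Fin n)) 1 := by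
    simp [norm_smul, abs_of_nonneg (inv_nonneg.2 (norm_nonneg w)), inv_mul_cancel₀ hwn.ne']
  have hpmem : -(‖w‖⁻¹ • w) ∈ Metric.sphere (0 : EuclideanSpace ℝ (Fin n)) 1 := by
    simp [norm_smul, abs_of_nonneg (inv_nonneg.2 (norm_nonneg w)), inv_mul_cancel₀ hwn.ne']
  have hcnn : (0:ℝ) ≤ c := by rw [hc]; positivity
  -- g p = c
  have hgp : g (-(‖w‖⁻¹ • w)) = c := by
    simp only [hg]
    rw [halfspace_neg z (‖w‖⁻¹ • w), halfspace_smul₂ z w (inv_pos.2 hwn), hc_slice,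
      ENNReal.toReal_mul, ENNReal.toReal_ofReal hcnn, ← hV]
    field_simp
  have hgq : g (‖w‖⁻¹ • w) = 1 - c := by
    simp only [hg]
    rw [halfspace_smul₁ z w (inv_pos.2 hwn)]
    rw [flip_volume hfin z hw, hc_slice, ENNReal.toReal_mul, ENNReal.toReal_ofReal hcnn, ← hV]
    field_simp
  -- continuity
  have hgcont : ContinuousOn g (Metric.sphere (0 : EuclideanSpace ℝ (Fin n)) 1) := by
    intro u hu
    have hune : u ≠ 0 := by
      intro h; rw [h] at hu; simp at hu
    exact ContinuousAt.continuousWithinAt ((g_tendsto hfin z hune).div_const V)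
  -- connectedness of sphere
  have hrank : 1 < Module.rank ℝ (EuclideanSpace ℝ (Fin n)) := by
    rw [← Module.finrank_eq_rank, finrank_euclideanSpace_fin]
    exact_mod_cast lt_of_lt_of_le one_lt_two hn
  have hconn : IsPreconnected (Metric.sphere (0 : EuclideanSpace ℝ (Fin n)) 1) :=
    (isConnected_sphere hrank 0 zero_le_one).isPreconnected
  have hIcc := hconn.intermediate_value hpmem hqmem hgcont
  have hα' : α ∈ Icc (g (-(‖w‖⁻¹ • w))) (g (‖w‖⁻¹ • w)) := by rw [hgp, hgq]; exact hα
  obtain ⟨u, hus, hgu⟩ := hIcc hα'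
  refine ⟨u, ⟪u, z⟫, ?_, rfl, ?_⟩
  · intro h; rw [h] at hus; simp at hus
  · rw [← hgu]

end Main
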